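/- Let P ∈ P^2 be a point with all coordinates nonzero (P ∈ P^2 \ Δ_1) and let Q ∈ P^2 be any point (so that P ⋆ Q is defined). Then for every integer n ≥ 1, I(P) ⋆ I(Q)^n = I(P ⋆ Q)^n. -/

import Mathlib

open MvPolynomial

noncomputable section

variable {K : Type*} [Field K]

/-- The Hadamard product of two ideals `I, J ⊆ K[x_0,x_1,x_2]`: introduce new variables
`y_0,y_1,y_2` and `z_0,z_1,z_2` (encoded via a sum type), map `I` via `x_i ↦ y_i`, `J` via
`x_i ↦ z_i`, add the relations `x_i − y_i z_i`, and eliminate `y, z` (i.e. take the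
preimage in `K[x_0,x_1,x_2]`). -/
def hadamard (I J : Ideal (MvPolynomial (Fin 3) K)) : Ideal (MvPolynomial (Fin 3) K) :=
  Ideal.comap
    (rename (Sum.inl : Fin 3 → Fin 3 ⊕ (Fin 3 ⊕ Fin 3)))
    (Ideal.map (rename (fun i : Fin 3 => (Sum.inr (Sum.inl i) : Fin 3 ⊕ (Fin 3 ⊕ Fin 3)))) I
      + Ideal.map (rename (fun i : Fin 3 => (Sum.inr (Sum.inr i) : Fin 3 ⊕ (Fin 3 ⊕ Fin 3)))) J
      + Ideal.span { f | ∃ i : Fin 3,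
          f = X (Sum.inl i) - X (Sum.inr (Sum.inl i)) * X (Sum.inr (Sum.inr i)) })

/-- The homogeneous vanishing ideal of the point `P = [p_0:p_1:p_2] ∈ ℙ²`, generated by
the forms `p_j x_i − p_i x_j`. -/
def pointIdeal (p : Fin 3 → K) : Ideal (MvPolynomial (Fin 3) K) :=
  Ideal.span { f | ∃ i j : Fin 3, f = C (p j) * X i - C (p i) * X j }

/-- The irrelevant ideal `𝔪 = ⟨x_0,x_1,x_2⟩` of `K[x_0,x_1,x_2]`. -/
def irrelevantIdeal (K : Type*) [Field K] : Ideal (MvPolynomial (Fin 3) K) :=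
  Ideal.span (Set.range X)

/-- auxiliary: `(I ⊔ J) ^ n ≤ I ^ n ⊔ J`. -/
lemma pow_sup_le_aux {R : Type*} [CommRing R] (I J : Ideal R) (n : ℕ) :
    (I ⊔ J) ^ n ≤ I ^ n ⊔ J := by
  induction n with
  | zero => simp
  | succ m ih =>
    rw [pow_succ]
    calc (I ⊔ J) ^ m * (I ⊔ J) ≤ (I ^ m ⊔ J) * (I ⊔ J) := Ideal.mul_mono ih le_rfl
      _ ≤ I ^ (m + 1) ⊔ J := by
          rw [Ideal.sup_mul, Ideal.mul_sup, Ideal.mul_sup]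
          apply sup_le (sup_le ?_ ?_) (sup_le ?_ ?_)
          · rw [← pow_succ]; exact le_sup_left
          · exact le_sup_of_le_right Ideal.mul_le_right
          · exact le_sup_of_le_right Ideal.mul_le_left
          · exact le_sup_of_le_right Ideal.mul_le_right

set_option maxHeartbeats 1000000 in
/-- If `P ∈ ℙ² \ Δ₁` (all coordinates nonzero) and `Q ∈ ℙ²` is any point (so that
`P ⋆ Q` is defined), then for every `n ≥ 1`, `I(P) ⋆ I(Q)^n = I(P ⋆ Q)^n`. -/
theorem hadamard_pointIdeal_pow_of_general_point [IsAlgClosed K] (p q : Fin 3 → K)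
    (hp : ∀ i, p i ≠ 0) (hq : q ≠ 0) (n : ℕ) (hn : 1 ≤ n) :
    hadamard (pointIdeal p) (pointIdeal q ^ n) = pointIdeal (fun i => p i * q i) ^ n := by
  classical
  set σ3 := (Fin 3 ⊕ (Fin 3 ⊕ Fin 3)) with hσ3
  -- the three renamings
  let ρ₁ : MvPolynomial (Fin 3) K →ₐ[K] MvPolynomial σ3 K :=
    rename (Sum.inl : Fin 3 → σ3)
  let ρ₂ : MvPolynomial (Fin 3) K →ₐ[K] MvPolynomial σ3 K :=
    rename (fun i : Fin 3 => (Sum.inr (Sum.inl i) : σ3))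
  let ρ₃ : MvPolynomial (Fin 3) K →ₐ[K] MvPolynomial σ3 K :=
    rename (fun i : Fin 3 => (Sum.inr (Sum.inr i) : σ3))
  set S : Ideal (MvPolynomial σ3 K) := Ideal.span { f | ∃ i : Fin 3,
      f = X (Sum.inl i) - X (Sum.inr (Sum.inl i)) * X (Sum.inr (Sum.inr i)) } with hSdef
  set B : Ideal (MvPolynomial σ3 K) :=
      Ideal.map ρ₂ (pointIdeal p) + Ideal.map ρ₃ (pointIdeal q ^ n) + S with hBdef
  have hBsup : B = Ideal.map ρ₂ (pointIdeal p) ⊔ Ideal.map ρ₃ (pointIdeal q ^ n) ⊔ S := rfl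
  have hHad : hadamard (pointIdeal p) (pointIdeal q ^ n) = Ideal.comap ρ₁ B := rfl
  set N : Ideal (MvPolynomial (Fin 3) K) := pointIdeal (fun i => p i * q i) ^ n with hNdef
  have hC1 : ∀ i : Fin 3, (C (p i) * C ((p i)⁻¹) : MvPolynomial (Fin 3) K) = 1 := fun i => by
    rw [← C_mul, mul_inv_cancel₀ (hp i), C_1]
  rw [hHad]
  apply le_antisymm
  · -- hard direction: comap ρ₁ B ≤ N
    -- the evaluation map
    let mk : MvPolynomial (Fin 3) K →ₐ[K] MvPolynomial (Fin 3) K ⧸ N :=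
      Ideal.Quotient.mkₐ K N
    let v : σ3 → MvPolynomial (Fin 3) K ⧸ N :=
      Sum.elim (fun i => mk (X i))
        (Sum.elim (fun i => mk (C (p i))) (fun i => mk (C ((p i)⁻¹) * X i)))
    let Φ : MvPolynomial σ3 K →ₐ[K] MvPolynomial (Fin 3) K ⧸ N := aeval v
    -- Φ ∘ ρ₁ = mk
    have hcomp1 : Φ.comp ρ₁ = mk := by
      apply algHom_ext; intro i
      simp [Φ, ρ₁, v, mk]
    -- the scaling map τ : x_i ↦ p_i⁻¹ x_i
    let τ : MvPolynomial (Fin 3) K →ₐ[K] MvPolynomial (Fin 3) K :=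
      aeval (fun i => C ((p i)⁻¹) * X i)
    have hcomp3 : Φ.comp ρ₃ = mk.comp τ := by
      apply algHom_ext; intro i
      simp [Φ, ρ₃, v, mk, τ]
    have hτ : Ideal.map τ (pointIdeal q) ≤ pointIdeal (fun i => p i * q i) := by
      rw [Ideal.map_le_iff_le_comap, pointIdeal, Ideal.span_le]
      rintro _ ⟨i, j, rfl⟩
      rw [SetLike.mem_coe, Ideal.mem_comap]
      have hmem : C ((p i)⁻¹ * (p j)⁻¹) *
          (C ((fun i => p i * q i) j) * X i - C ((fun i => p i * q i) i) * X j)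
          ∈ pointIdeal (fun i => p i * q i) :=
        Ideal.mul_mem_left _ _ (Ideal.subset_span ⟨i, j, rfl⟩)
      have heq : τ (C (q j) * X i - C (q i) * X j) =
          C ((p i)⁻¹ * (p j)⁻¹) *
          (C ((fun i => p i * q i) j) * X i - C ((fun i => p i * q i) i) * X j) := by
        simp only [τ, map_sub, map_mul, aeval_C, aeval_X, algebraMap_eq, C_mul]
        linear_combination (-(C ((p i)⁻¹) * C (q j) * (X i : MvPolynomial (Fin 3) K))) * hC1 j
          + (C ((p j)⁻¹) * C (q i) * (X j : MvPolynomial (Fin 3) K)) * hC1 i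
      rw [heq]; exact hmem
    -- B ≤ ker Φ
    have hBker : B ≤ RingHom.ker Φ := by
      rw [hBsup]
      apply sup_le (sup_le ?_ ?_) ?_
      · rw [Ideal.map_le_iff_le_comap, pointIdeal, Ideal.span_le]
        rintro _ ⟨i, j, rfl⟩
        rw [SetLike.mem_coe, Ideal.mem_comap, RingHom.mem_ker]
        simp only [ρ₂, map_sub, map_mul, rename_C, rename_X]
        simp only [Φ, aeval_C, aeval_X, v, Sum.elim_inr, Sum.elim_inl]
        have e : ∀ a : K, mk (C a) = algebraMap K (MvPolynomial (Fin 3) K ⧸ N) a := fun a => by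
          rw [← MvPolynomial.algebraMap_eq]; exact mk.commutes a
        rw [e, e]; ring
      · rw [Ideal.map_le_iff_le_comap]
        intro f hf
        rw [Ideal.mem_comap, RingHom.mem_ker]
        have : Φ (ρ₃ f) = mk (τ f) := AlgHom.congr_fun hcomp3 f
        rw [this]
        have hτf : τ f ∈ N := by
          have h1 : τ f ∈ Ideal.map τ (pointIdeal q ^ n) := Ideal.mem_map_of_mem _ hf
          rw [Ideal.map_pow] at h1
          exact (Ideal.pow_right_mono hτ n) h1
        show Ideal.Quotient.mk N (τ f) = 0
        exact Ideal.Quotient.eq_zero_iff_mem.2 hτf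
      · rw [hSdef, Ideal.span_le]
        rintro _ ⟨i, rfl⟩
        rw [SetLike.mem_coe, RingHom.mem_ker]
        simp only [Φ, map_sub, map_mul, aeval_X, v, Sum.elim_inl, Sum.elim_inr]
        have : mk (C (p i)) * mk (C ((p i)⁻¹)) = 1 := by
          rw [← map_mul, hC1 i, map_one]
        rw [← mul_assoc, this, one_mul, sub_self]
    intro f hf
    rw [Ideal.mem_comap] at hf
    have h0 : Φ (ρ₁ f) = 0 := hBker hf
    have h1 : Φ (ρ₁ f) = mk f := AlgHom.congr_fun hcomp1 f
    rw [h1] at h0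
    have h0' : Ideal.Quotient.mk N f = 0 := h0
    exact Ideal.Quotient.eq_zero_iff_mem.1 h0'
  · -- easy direction: N ≤ comap ρ₁ B
    rw [← Ideal.map_le_iff_le_comap, hNdef, Ideal.map_pow]
    have key : Ideal.map ρ₁ (pointIdeal (fun i => p i * q i)) ≤
        Ideal.map ρ₃ (pointIdeal q) ⊔ (Ideal.map ρ₂ (pointIdeal p) ⊔ S) := by
      rw [Ideal.map_le_iff_le_comap, pointIdeal, Ideal.span_le]
      rintro _ ⟨i, j, rfl⟩
      rw [SetLike.mem_coe, Ideal.mem_comap]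
      have ha : ρ₃ (C (q j) * X i - C (q i) * X j) ∈ Ideal.map ρ₃ (pointIdeal q) :=
        Ideal.mem_map_of_mem _ (Ideal.subset_span ⟨i, j, rfl⟩)
      have hb : ρ₂ (C (p j) * X i - C (p i) * X j) ∈ Ideal.map ρ₂ (pointIdeal p) :=
        Ideal.mem_map_of_mem _ (Ideal.subset_span ⟨i, j, rfl⟩)
      have hc : (X (Sum.inl i) - X (Sum.inr (Sum.inl i)) * X (Sum.inr (Sum.inr i))
          : MvPolynomial σ3 K) ∈ S := Ideal.subset_span ⟨i, rfl⟩
      have hd : (X (Sum.inl j) - X (Sum.inr (Sum.inl j)) * X (Sum.inr (Sum.inr j))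
          : MvPolynomial σ3 K) ∈ S := Ideal.subset_span ⟨j, rfl⟩
      have hsum : ρ₁ (C ((fun i => p i * q i) j) * X i - C ((fun i => p i * q i) i) * X j) =
          C (p i) * X (Sum.inr (Sum.inl j)) * ρ₃ (C (q j) * X i - C (q i) * X j)
          + C (q j) * X (Sum.inr (Sum.inr i)) * ρ₂ (C (p j) * X i - C (p i) * X j)
          + (C (p j * q j) *
              (X (Sum.inl i) - X (Sum.inr (Sum.inl i)) * X (Sum.inr (Sum.inr i)))
            - C (p i * q i) *
              (X (Sum.inl j) - X (Sum.inr (Sum.inl j)) * X (Sum.inr (Sum.inr j)))) := by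
        simp only [ρ₁, ρ₂, ρ₃, map_sub, map_mul, rename_C, rename_X, C_mul]
        ring
      rw [hsum]
      refine Ideal.add_mem _ (Ideal.add_mem _ ?_ ?_) ?_
      · exact Ideal.mem_sup_left (Ideal.mul_mem_left _ _ ha)
      · exact Ideal.mem_sup_right (Ideal.mem_sup_left (Ideal.mul_mem_left _ _ hb))
      · exact Ideal.mem_sup_right (Ideal.mem_sup_right
          (Ideal.sub_mem _ (Ideal.mul_mem_left _ _ hc) (Ideal.mul_mem_left _ _ hd)))
    calc Ideal.map ρ₁ (pointIdeal (fun i => p i * q i)) ^ n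
        ≤ (Ideal.map ρ₃ (pointIdeal q) ⊔ (Ideal.map ρ₂ (pointIdeal p) ⊔ S)) ^ n :=
          Ideal.pow_right_mono key n
      _ ≤ Ideal.map ρ₃ (pointIdeal q) ^ n ⊔ (Ideal.map ρ₂ (pointIdeal p) ⊔ S) :=
          pow_sup_le_aux _ _ n
      _ ≤ B := by
          rw [hBsup, ← Ideal.map_pow]
          exact sup_le (le_sup_of_le_left le_sup_right)
            (sup_le (le_sup_of_le_left le_sup_left) le_sup_right)
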